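/- Given real numbers s1, s2, b1, b2 and a1 < a2, with s = (b2 - b1)/(a2 - a1) and M = max(|s1 - s|, |s2 - s|), there exists a cubic polynomial f with f(ai) = bi and f'(ai) = si for i = 1, 2, such that |(f(x2) - f(x1))/(x2 - x1) - s| ≤ 3M whenever a1 ≤ x1 < x2 ≤ a2. -/

import Mathlib

lemma key_ineq (A B t : ℝ) (ht0 : 0 ≤ t) (ht1 : t ≤ 1) :
    |A*(3*t^2-4*t+1) + B*(3*t^2-2*t)| ≤ 3 * max |A| |B| := by
  have h1 : |3*t^2-4*t+1| ≤ 1 := abs_le.mpr ⟨by nlinarith, by nlinarith⟩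
  have h2 : |3*t^2-2*t| ≤ 1 := abs_le.mpr ⟨by nlinarith, by nlinarith⟩
  have hA : |A| ≤ max |A| |B| := le_max_left _ _
  have hB : |B| ≤ max |A| |B| := le_max_right _ _
  have hM : (0:ℝ) ≤ max |A| |B| := le_trans (abs_nonneg A) hA
  calc |A*(3*t^2-4*t+1) + B*(3*t^2-2*t)|
      ≤ |A*(3*t^2-4*t+1)| + |B*(3*t^2-2*t)| := abs_add_le _ _
    _ = |A| * |3*t^2-4*t+1| + |B| * |3*t^2-2*t| := by rw [abs_mul, abs_mul]
    _ ≤ max |A| |B| * 1 + max |A| |B| * 1 := by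
        gcongr
    _ ≤ 3 * max |A| |B| := by linarith

theorem stmt_1 (s1 s2 b1 b2 a1 a2 : ℝ) (hlt : a1 < a2) :
    ∃ f : Polynomial ℝ, f.degree ≤ 3 ∧
      f.eval a1 = b1 ∧ f.eval a2 = b2 ∧
      f.derivative.eval a1 = s1 ∧ f.derivative.eval a2 = s2 ∧
      ∀ x1 x2 : ℝ, a1 ≤ x1 → x1 < x2 → x2 ≤ a2 →
        |(f.eval x2 - f.eval x1) / (x2 - x1) - (b2 - b1) / (a2 - a1)| ≤
          3 * max |s1 - (b2 - b1) / (a2 - a1)| |s2 - (b2 - b1) / (a2 - a1)| := by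
  set h : ℝ := a2 - a1 with hh
  have hh0 : 0 < h := by simp only [hh]; linarith
  set s : ℝ := (b2 - b1) / h with hs
  set c : ℝ := (3*s - 2*s1 - s2) / h with hc
  set d : ℝ := (s1 + s2 - 2*s) / h^2 with hd
  have hb : b2 - b1 = s * h := by rw [hs, div_mul_cancel₀ _ hh0.ne']
  have hc' : c * h = 3*s - 2*s1 - s2 := by rw [hc, div_mul_cancel₀ _ hh0.ne']
  have hd' : d * h^2 = s1 + s2 - 2*s := by rw [hd, div_mul_cancel₀ _ (pow_ne_zero 2 hh0.ne')]
  open Polynomial in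
  set f : ℝ[X] := C b1 + C s1*(X - C a1) + C c*(X - C a1)^2 + C d*(X - C a1)^3 with hf
  have heval : ∀ x : ℝ, f.eval x = b1 + s1*(x-a1) + c*(x-a1)^2 + d*(x-a1)^3 := by
    intro x; simp [hf]
  have heval' : ∀ x : ℝ, f.derivative.eval x = s1 + 2*c*(x-a1) + 3*d*(x-a1)^2 := by
    intro x
    simp only [hf, Polynomial.derivative_add, Polynomial.derivative_mul,
      Polynomial.derivative_pow, Polynomial.derivative_sub, Polynomial.derivative_C,
      Polynomial.derivative_X, Polynomial.eval_add, Polynomial.eval_mul,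
      Polynomial.eval_pow, Polynomial.eval_sub, Polynomial.eval_C, Polynomial.eval_X,
      Polynomial.eval_natCast, Polynomial.eval_zero, Polynomial.eval_one]
    push_cast
    ring
  have ha2 : a2 - a1 = h := rfl
  refine ⟨f, ?_, ?_, ?_, ?_, ?_, ?_⟩
  · rw [hf]; compute_degree
  · rw [heval]; ring
  · rw [heval, ha2]; nlinarith [hc', hd', hb]
  · rw [heval']; ring
  · rw [heval', ha2]; nlinarith [hc', hd']
  · intro x1 x2 hx1 hlt12 hx2
    have deriv_bound : ∀ x ∈ Set.Icc a1 a2,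
        |f.derivative.eval x - s| ≤ 3 * max |s1 - s| |s2 - s| := by
      intro x hx
      set t : ℝ := (x - a1) / h with ht
      have ht0 : 0 ≤ t := div_nonneg (by linarith [hx.1]) hh0.le
      have ht1 : t ≤ 1 := by
        rw [ht, div_le_one hh0]; simp only [hh]; linarith [hx.2]
      have hxa : x - a1 = t * h := by rw [ht, div_mul_cancel₀ _ hh0.ne']
      have hrw : f.derivative.eval x - s
          = (s1 - s)*(3*t^2-4*t+1) + (s2 - s)*(3*t^2-2*t) := by
        rw [heval', hxa]
        nlinarith [hc', hd', sq_nonneg t]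
      rw [hrw]
      exact key_ineq _ _ t ht0 ht1
    have hcont : ContinuousOn (fun x => f.eval x) (Set.Icc x1 x2) :=
      f.continuousOn_aeval
    have hderiv : ∀ x ∈ Set.Ioo x1 x2,
        HasDerivAt (fun x => f.eval x) (f.derivative.eval x) x :=
      fun x _ => f.hasDerivAt x
    obtain ⟨z, hz, hz2⟩ := exists_hasDerivAt_eq_slope (fun x => f.eval x)
      (fun x => f.derivative.eval x) hlt12 hcont hderiv
    have hzI : z ∈ Set.Icc a1 a2 :=
      ⟨le_trans hx1 hz.1.le, le_trans hz.2.le hx2⟩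
    have heq : (f.eval x2 - f.eval x1) / (x2 - x1) = f.derivative.eval z := hz2.symm
    rw [heq]
    exact deriv_bound z hzI
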